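/- arXiv:1008.3763 — 4 statements merged into one kernel-verified Lean document; each statement's English description precedes it below -/
import Mathlib

section
/- Let R be a commutative ring of prime characteristic p and let c ∈ R. Define two left R[x,f]-module structures on R: one with x·r = r^p and one (denoted (R,α_c)) with x·r = c·r^p. Then (R,α) ≅ (R,α_c) as left R[x,f]-modules if and only if c is a unit of R possessing a (p−1)-th root in R. -/
/-- Let `R` be a commutative ring of prime characteristic `p` and `c ∈ R`.
Consider the two left `R[x,f]`-module structures on `R`: `(R, α)` with `x·r = rᵖ`, and
`(R, α_c)` with `x·r = c·rᵖ`.  An isomorphism of left `R[x,f]`-modules between them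
is an `R`-linear bijection `e : R → R` with `e (rᵖ) = c * (e r)ᵖ` for all `r`.
Such an isomorphism exists iff `c` is a unit of `R` possessing a `(p-1)`-th root in `R`. -/
theorem skew_structures_iso_iff_unit_with_root (R : Type*) [CommRing R] (p : ℕ)
    [Fact p.Prime] [CharP R p] (c : R) :
    (∃ e : R ≃ₗ[R] R, ∀ r : R, e (r ^ p) = c * (e r) ^ p) ↔
      (IsUnit c ∧ ∃ d : R, d ^ (p - 1) = c) := by
  have hp : p.Prime := Fact.out
  have hp1 : 1 ≤ p := hp.one_lt.le
  constructor
  · rintro ⟨e, he⟩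
    set u : R := e 1 with hu
    have heu : ∀ r : R, e r = r * u := by
      intro r
      calc e r = e (r • 1) := by rw [smul_eq_mul, mul_one]
        _ = r * u := by rw [map_smul, smul_eq_mul]
    -- u is a unit with inverse v = e.symm 1
    set v : R := e.symm 1 with hv
    have huv : u * v = 1 := by
      have := heu (e.symm 1)
      rw [e.apply_symm_apply] at this
      rw [mul_comm]; exact this.symm
    have h1 : u = c * u ^ p := by
      have := he 1
      simpa [hu] using this
    have hc' : c = u * v ^ p := by
      calc c = c * (u * v) ^ p := by rw [huv, one_pow, mul_one]
        _ = (c * u ^ p) * v ^ p := by rw [mul_pow]; ring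
        _ = u * v ^ p := by rw [← h1]
    have hcu : IsUnit c := by
      refine IsUnit.of_mul_eq_one (a := c) (v * u ^ p) ?_
      calc c * (v * u ^ p) = (u * v) ^ (p + 1) := by rw [hc']; rw [mul_pow]; ring
        _ = 1 := by rw [huv, one_pow]
    refine ⟨hcu, v, ?_⟩
    calc v ^ (p - 1) = v ^ (p - 1) * (u * v) := by rw [huv, mul_one]
      _ = u * (v ^ (p - 1) * v) := by ring
      _ = u * v ^ p := by rw [← pow_succ, Nat.sub_add_cancel hp1]
      _ = c := hc'.symm
  · rintro ⟨hc, d, hd⟩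
    have hdu : IsUnit d := by
      have : IsUnit (d ^ (p - 1)) := hd ▸ hc
      exact (isUnit_pow_iff (Nat.sub_ne_zero_of_lt hp.one_lt)).mp this
    obtain ⟨U, hU⟩ := hdu
    set u : R := ↑U⁻¹ with huu
    have hUu : d * u = 1 := by rw [huu, ← hU]; exact_mod_cast U.mul_inv
    refine ⟨{ toFun := fun r => u * r
              map_add' := by intro a b; ring
              map_smul' := by intro a b; simp [smul_eq_mul]; ring
              invFun := fun r => d * r
              left_inv := by intro r; simp only []; rw [← mul_assoc, hUu, one_mul]
              right_inv := by intro r; simp only []; rw [← mul_assoc, mul_comm u d, hUu, one_mul] }, ?_⟩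
    intro r
    simp only [LinearEquiv.coe_mk, LinearMap.coe_mk, AddHom.coe_mk]
    have key : c * u ^ p = u := by
      calc c * u ^ p = d ^ (p - 1) * (u ^ (p - 1) * u) := by
            rw [hd, ← pow_succ]; congr 2; omega
        _ = (d * u) ^ (p - 1) * u := by rw [mul_pow]; ring
        _ = u := by rw [hUu, one_pow, one_mul]
    calc u * r ^ p = (c * u ^ p) * r ^ p := by rw [key]
      _ = c * (u * r) ^ p := by rw [mul_pow]; ring
end

section
/- Let R be a commutative ring of prime characteristic p and let M be a right R[x,f]-module. Suppose there exists s ∈ R with M·s ⊆ M·x. Then M·s² ⊆ M·x^k for every k ∈ ℕ, k ≥ 1. -/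
/-- Let `R` be a commutative ring of prime characteristic `p` and `M` a right
`R[x,f]`-module, encoded by its underlying `R`-module together with the additive map
`ξ : M → M`, `ξ m = m·x`, satisfying `ξ (rᵖ • m) = r • ξ m` (i.e. `(m·rᵖ)·x = (m·x)·r`).
If there is `s ∈ R` with `M·s ⊆ M·x`, then `M·s² ⊆ M·xᵏ` for every `k ≥ 1`. -/
theorem Ms_sq_subset_Mxk (R M : Type*) [CommRing R] (p : ℕ) [Fact p.Prime] [CharP R p]
    [AddCommGroup M] [Module R M] (ξ : M →+ M)
    (hξ : ∀ (r : R) (m : M), ξ (r ^ p • m) = r • ξ m)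
    (s : R) (h : ∀ m : M, ∃ m' : M, s • m = ξ m') :
    ∀ k : ℕ, 1 ≤ k → ∀ m : M, ∃ m' : M, (s ^ 2) • m = (⇑ξ)^[k] m' := by
  have hp : 2 ≤ p := (Fact.out : p.Prime).two_le
  intro k hk
  induction k, hk using Nat.le_induction with
  | base =>
    intro m
    obtain ⟨m₁, h₁⟩ := h m
    refine ⟨s ^ p • m₁, ?_⟩
    rw [Function.iterate_one, hξ, ← h₁, pow_two, mul_smul]
  | succ k hk ih =>
    intro m
    obtain ⟨m₁, h₁⟩ := h m
    obtain ⟨n, hn⟩ := ih (s ^ (p - 2) • m₁)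
    refine ⟨n, ?_⟩
    have hsp : s ^ p • m₁ = (⇑ξ)^[k] n := by
      rw [← hn, smul_smul, ← pow_add]
      congr 2
      omega
    calc (s ^ 2) • m = s • (s • m) := by rw [pow_two, mul_smul]
      _ = s • ξ m₁ := by rw [h₁]
      _ = ξ (s ^ p • m₁) := (hξ s m₁).symm
      _ = ξ ((⇑ξ)^[k] n) := by rw [hsp]
      _ = (⇑ξ)^[k + 1] n := by rw [Function.iterate_succ_apply']
end

section
/- Let R be a commutative ring of prime characteristic p, M a right R[x,f]-module, and S a multiplicatively closed subset of R. Then the localization S⁻¹M carries a natural right (S⁻¹R)[x,f]-module structure in which (m/s)·x = (m s^{p−1} x)/s, and under this structure S⁻¹(M·x^k) = (S⁻¹M)·x^k for all k ∈ ℕ. -/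
open LocalizedModule


/-- Let `R` be a commutative ring of prime characteristic `p`, `M` a right
`R[x,f]`-module (encoded by the additive map `ξ : M → M`, `ξ m = m·x`, with
`ξ (rᵖ • m) = r • ξ m`), and `S` a multiplicatively closed subset of `R`.  Then `S⁻¹M`
carries a natural right `(S⁻¹R)[x,f]`-module structure: an additive map `Ξ` with
`Ξ (m/s) = (ξ (s^{p-1} • m))/s` and `Ξ (cᵖ • u) = c • Ξ u` for all `c ∈ S⁻¹R`;
moreover, under this structure, `S⁻¹(M·xᵏ) = (S⁻¹M)·xᵏ` for all `k`. -/
theorem localized_right_skew_module (R M : Type*) [CommRing R] (p : ℕ) [Fact p.Prime]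
    [CharP R p] [AddCommGroup M] [Module R M] (ξ : M →+ M)
    (hξ : ∀ (r : R) (m : M), ξ (r ^ p • m) = r • ξ m) (S : Submonoid R) :
    ∃ Ξ : LocalizedModule S M →+ LocalizedModule S M,
      (∀ (m : M) (s : S),
        Ξ (LocalizedModule.mk m s) = LocalizedModule.mk (ξ ((s : R) ^ (p - 1) • m)) s) ∧
      (∀ (c : Localization S) (u : LocalizedModule S M), Ξ (c ^ p • u) = c • Ξ u) ∧
      (∀ k : ℕ,
        {y : LocalizedModule S M | ∃ (m : M) (s : S), y = LocalizedModule.mk ((⇑ξ)^[k] m) s}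
          = Set.range ((⇑Ξ)^[k])) := by
  have hppos : 0 < p := (Fact.out : p.Prime).pos
  obtain ⟨q, hq⟩ : ∃ q, p = q + 1 := ⟨p - 1, (Nat.succ_pred_eq_of_pos hppos).symm⟩
  have hp1 : p - 1 = q := by omega
  -- iterate version of hξ
  have hξk : ∀ (k : ℕ) (r : R) (m : M), (⇑ξ)^[k] (r ^ p ^ k • m) = r • (⇑ξ)^[k] m := by
    intro k
    induction k with
    | zero => intro r m; simp
    | succ k ih =>
      intro r m
      rw [Function.iterate_succ_apply', Function.iterate_succ_apply',
        show r ^ p ^ (k + 1) • m = (r ^ p) ^ p ^ k • m by rw [← pow_mul, ← pow_succ'],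
        ih, hξ]
  -- well-definedness
  have wd : ∀ (a a' : M × S), a ≈ a' →
      mk (ξ ((a.2 : R) ^ (p - 1) • a.1)) a.2 = mk (ξ ((a'.2 : R) ^ (p - 1) • a'.1)) a'.2 := by
    rintro ⟨m, s⟩ ⟨m', s'⟩ ⟨u, hu⟩
    simp only [Submonoid.smul_def, smul_smul] at hu
    rw [mk_eq]
    refine ⟨u, ?_⟩
    simp only [Submonoid.smul_def, smul_smul]
    rw [← hξ ((u:R)*s'), ← hξ ((u:R)*s)]
    congr 1
    rw [smul_smul, smul_smul,
      show ((u:R)*s')^p * (s:R)^(p-1) = ((u:R)^q*(s:R)^q*(s':R)^q) * ((u:R)*s') by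
        rw [hp1, hq]; ring,
      show ((u:R)*s)^p * (s':R)^(p-1) = ((u:R)^q*(s:R)^q*(s':R)^q) * ((u:R)*s) by
        rw [hp1, hq]; ring,
      mul_smul, mul_smul, hu]
    simp only [smul_smul, mul_assoc]
  set F : LocalizedModule S M → LocalizedModule S M :=
    fun x => x.liftOn (fun a => mk (ξ ((a.2 : R) ^ (p - 1) • a.1)) a.2) wd with hF
  have F_mk : ∀ (m : M) (s : S), F (mk m s) = mk (ξ ((s : R) ^ (p - 1) • m)) s := by
    intro m s; rw [hF]; exact liftOn_mk wd m s
  have Fadd : ∀ x y, F (x + y) = F x + F y := by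
    intro x y
    induction x, y using LocalizedModule.induction_on₂ with
    | h m n s t =>
    rw [mk_add_mk, F_mk, F_mk, F_mk, mk_add_mk]
    have h1 : ξ (((s * t : S) : R) ^ (p - 1) • (t • m + s • n))
        = t • ξ ((s : R) ^ (p - 1) • m) + s • ξ ((t : R) ^ (p - 1) • n) := by
      simp only [Submonoid.smul_def, Submonoid.coe_mul, smul_add, map_add, smul_smul]
      congr 1
      · rw [show ((s:R)*t)^(p-1) * t = ((t:R))^p * ((s:R)^(p-1)) by rw [hp1, hq]; ring,
          mul_smul, hξ]
      · rw [show ((s:R)*t)^(p-1) * s = ((s:R))^p * ((t:R)^(p-1)) by rw [hp1, hq]; ring,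
          mul_smul, hξ]
    rw [h1]
  have hcoe : ⇑(AddMonoidHom.mk' F Fadd) = F := rfl
  refine ⟨AddMonoidHom.mk' F Fadd, ?_, ?_, ?_⟩
  · intro m s; rw [hcoe]; exact F_mk m s
  · -- semilinearity
    intro c u
    simp only [hcoe]
    induction u with
    | h m s =>
    obtain ⟨⟨r, t⟩, rfl⟩ : ∃ a : R × S, c = Localization.mk a.1 a.2 := by
      induction c using Localization.induction_on with | H a => exact ⟨a, rfl⟩
    rw [Localization.mk_pow, mk_smul_mk, F_mk, F_mk, mk_smul_mk, mk_eq]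
    refine ⟨1, ?_⟩
    simp only [Submonoid.smul_def, one_smul, Submonoid.coe_mul, SubmonoidClass.coe_pow]
    rw [show (((t:R)^p * s)^(p-1)) • (r^p • m) = (((t:R)^(p-1)*r)^p) • ((s:R)^(p-1) • m) by
        rw [smul_smul, smul_smul]; congr 1; rw [hp1, hq]; ring,
      hξ]
    simp only [smul_smul]
    congr 1
    rw [hp1, hq]; ring
  · -- images of x^k
    intro k
    have iter_mk : ∀ (m : M) (s : S),
        (⇑(AddMonoidHom.mk' F Fadd))^[k] (mk m s)
          = mk ((⇑ξ)^[k] ((s : R) ^ (p ^ k - 1) • m)) s := by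
      simp only [hcoe]
      induction k with
      | zero => intro m s; simp
      | succ k ih =>
        intro m s
        have hpk' : 0 < p ^ k := pow_pos hppos k
        rw [Function.iterate_succ_apply', ih, F_mk]
        have e1 : (s : R) ^ (p - 1) • (⇑ξ)^[k] ((s : R) ^ (p ^ k - 1) • m)
            = (⇑ξ)^[k] ((s : R) ^ (p ^ (k + 1) - 1) • m) := by
          rw [hp1, ← hξk k ((s : R) ^ q), smul_smul, ← pow_mul, ← pow_add]
          have h4 : p ^ (k + 1) = q * p ^ k + p ^ k := by rw [pow_succ', hq]; ring
          obtain ⟨A, hA⟩ : ∃ A, p ^ k = A + 1 := ⟨p ^ k - 1, by omega⟩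
          rw [h4, hA, Nat.add_sub_cancel, Nat.add_succ_sub_one]
        rw [e1, Function.iterate_succ_apply' (⇑ξ) k]
    have hpk : 0 < p ^ k := pow_pos hppos k
    ext y
    simp only [Set.mem_setOf_eq, Set.mem_range]
    constructor
    · rintro ⟨m, s, rfl⟩
      refine ⟨mk m (s ^ p ^ k), ?_⟩
      rw [iter_mk]
      have e2 : ((s ^ p ^ k : S) : R) ^ (p ^ k - 1) • m
          = ((s : R) ^ (p ^ k - 1)) ^ p ^ k • m := by
        rw [SubmonoidClass.coe_pow, ← pow_mul, ← pow_mul, Nat.mul_comm]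
      rw [e2, hξk]
      rw [mk_eq]
      refine ⟨1, ?_⟩
      simp only [Submonoid.smul_def, one_smul, SubmonoidClass.coe_pow, smul_smul]
      congr 1
      rw [← pow_succ']
      congr 1
      omega
    · rintro ⟨x, rfl⟩
      induction x with
      | h m s => exact ⟨_, s, iter_mk m s⟩
end

section
/- Let R be a commutative Noetherian ring of prime characteristic p and let M be a right module over the Frobenius skew polynomial ring R[x,f] that is Noetherian (finitely generated) as an R-module. Then there exists k ∈ ℕ such that M·x^k = M·x^{k+1}. -/
/-!
Auxiliary material for the dual Hartshorne–Speiser–Lyubeznik theorem.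

We work with an additive map `ξ : M →+ M` satisfying `ξ (r ^ p • m) = r • ξ m`
(a "Cartier-type" operator).  The sets `Set.range (⇑ξ)^[e]` are then `R`-submodules,
and we show the descending chain of these submodules stabilizes, by a streamlined
version of Gabber's argument: well-founded induction on the annihilator of `M`.
-/

open Function

section Semiconj

/-- Pushing ranges of iterates through a semiconjugating map. -/
theorem dualHSL_semiconj_range_iterate {α β : Type*} {φ : α → β} {f : α → α} {g : β → β}
    (h : ∀ a, φ (f a) = g (φ a)) (j : ℕ) :
    φ '' Set.range f^[j] = g^[j] '' Set.range φ := by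
  have hs : Function.Semiconj φ f g := h
  calc φ '' Set.range f^[j] = Set.range (φ ∘ f^[j]) := (Set.range_comp φ _).symm
    _ = Set.range (g^[j] ∘ φ) := by rw [(hs.iterate_right j).comp_eq]
    _ = g^[j] '' Set.range φ := Set.range_comp _ _

end Semiconj

section ArtinianAux

variable {A : Type*} [CommRing A] [IsNoetherianRing A] (mI : Ideal A) [mI.IsMaximal]

/-- A finitely generated module over a Noetherian ring killed by a maximal ideal is Artinian. -/
theorem dualHSL_isArtinian_of_maximal_le_ann (V : Type*) [AddCommGroup V] [Module A V]
    [Module.Finite A V] (h : mI ≤ Module.annihilator A V) : IsArtinian A V := by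
  have htor : Module.IsTorsionBySet A V mI :=
    fun x a => Module.mem_annihilator.mp (h a.2) x
  letI : Module (A ⧸ mI) V := htor.module
  haveI : IsScalarTower A (A ⧸ mI) V := htor.isScalarTower
  haveI : Module.Finite (A ⧸ mI) V := Module.Finite.of_restrictScalars_finite A (A ⧸ mI) V
  letI : Field (A ⧸ mI) := Ideal.Quotient.field mI
  haveI : IsArtinian (A ⧸ mI) V := isArtinian_of_fg_of_artinian'
  -- transfer well-foundedness from `(A ⧸ mI)`-submodules to `A`-submodules
  have smul_eq : ∀ (a : A) (x : V), (Ideal.Quotient.mk mI a) • x = a • x := fun a x => by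
    have h1 : (a • (1 : A ⧸ mI)) • x = a • ((1 : A ⧸ mI) • x) := smul_assoc a (1 : A ⧸ mI) x
    rw [one_smul] at h1
    rw [← Ideal.Quotient.algebraMap_eq, Algebra.algebraMap_eq_smul_one, h1]
  let emb : Submodule A V ↪o Submodule (A ⧸ mI) V :=
    { toFun := fun W =>
        { carrier := (W : Set V)
          add_mem' := fun ha hb => W.add_mem ha hb
          zero_mem' := W.zero_mem
          smul_mem' := by
            rintro c x hx
            obtain ⟨a, rfl⟩ := Ideal.Quotient.mk_surjective c
            rw [smul_eq a x]
            exact W.smul_mem a hx }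
      inj' := fun W W' hWW' => by
        apply SetLike.coe_injective
        exact congrArg (fun (U : Submodule (A ⧸ mI) V) => (U : Set V)) hWW'
      map_rel_iff' := Iff.rfl }
  exact ⟨emb.wellFounded IsWellFounded.wf⟩

/-- A finitely generated module over a Noetherian ring killed by a power of a maximal ideal
is Artinian. -/
theorem dualHSL_isArtinian_of_maximal_pow_le_ann (n : ℕ) :
    ∀ (V : Type*) [AddCommGroup V] [Module A V] [Module.Finite A V],
      mI ^ n ≤ Module.annihilator A V → IsArtinian A V := by
  induction n with
  | zero =>
      intro V _ _ _ h
      have hz : ∀ v : V, v = 0 := fun v => by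
        have h1 : (1 : A) ∈ mI ^ 0 := by simp
        have := Module.mem_annihilator.mp (h h1) v
        simpa using this
      haveI : Subsingleton V := ⟨fun a b => by rw [hz a, hz b]⟩
      infer_instance
  | succ n IH =>
      intro V _ _ _ h
      set U : Submodule A V := mI ^ n • ⊤ with hU
      haveI : Module.Finite A U := Module.Finite.iff_fg.mpr (IsNoetherian.noetherian U)
      have hUkill : mI ≤ Module.annihilator A U := by
        intro a ha
        rw [Module.mem_annihilator]
        rintro ⟨u, hu⟩
        apply Subtype.ext
        show a • u = 0
        refine Submodule.smul_induction_on hu ?_ ?_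
        · intro r hr v _
          rw [smul_smul]
          have hmem : a * r ∈ mI ^ (n + 1) := by
            rw [pow_succ']
            exact Ideal.mul_mem_mul ha hr
          exact Module.mem_annihilator.mp (h hmem) v
        · intro x y hx hy
          rw [smul_add, hx, hy, add_zero]
      haveI : IsArtinian A U := dualHSL_isArtinian_of_maximal_le_ann mI U hUkill
      have hQkill : mI ^ n ≤ Module.annihilator A (V ⧸ U) := by
        intro r hr
        rw [Module.mem_annihilator]
        intro q
        obtain ⟨v, rfl⟩ := Submodule.Quotient.mk_surjective U q
        rw [← Submodule.Quotient.mk_smul, Submodule.Quotient.mk_eq_zero]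
        exact Submodule.smul_mem_smul hr Submodule.mem_top
      haveI : IsArtinian A (V ⧸ U) := IH (V ⧸ U) hQkill
      exact isArtinian_of_range_eq_ker U.subtype U.mkQ
        (by rw [Submodule.range_subtype, Submodule.ker_mkQ])

end ArtinianAux

section Core

variable {R : Type*} [CommRing R]

/-- Iterated semilinearity: `ξ^[e] (r^(p^e) • m) = r • ξ^[e] m`. -/
theorem dualHSL_iter_semilinear {M : Type*} [AddCommGroup M] [Module R M] {p : ℕ}
    (ξ : M →+ M) (hξ : ∀ (r : R) (m : M), ξ (r ^ p • m) = r • ξ m) (e : ℕ) (r : R) (m : M) :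
    (⇑ξ)^[e] (r ^ p ^ e • m) = r • (⇑ξ)^[e] m := by
  induction e generalizing m with
  | zero => simp
  | succ e ih =>
      rw [Function.iterate_succ_apply, Function.iterate_succ_apply, pow_succ, pow_mul,
        hξ (r ^ p ^ e) m]
      exact ih (ξ m)

variable {M : Type*} [AddCommGroup M] [Module R M]

/-- The range of `ξ^[e]` as an `R`-submodule. -/
def dualHSL_T {p : ℕ} (ξ : M →+ M) (hξ : ∀ (r : R) (m : M), ξ (r ^ p • m) = r • ξ m)
    (e : ℕ) : Submodule R M where
  carrier := Set.range (⇑ξ)^[e]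
  zero_mem' := ⟨0, iterate_map_zero ξ e⟩
  add_mem' := by
    rintro a b ⟨x, rfl⟩ ⟨y, rfl⟩
    exact ⟨x + y, iterate_map_add ξ e x y⟩
  smul_mem' := by
    rintro r _ ⟨x, rfl⟩
    exact ⟨r ^ p ^ e • x, dualHSL_iter_semilinear ξ hξ e r x⟩

theorem dualHSL_T_coe {p : ℕ} (ξ : M →+ M) (hξ : ∀ (r : R) (m : M), ξ (r ^ p • m) = r • ξ m)
    (e : ℕ) : (dualHSL_T ξ hξ e : Set M) = Set.range (⇑ξ)^[e] := rfl

theorem dualHSL_T_succ_le {p : ℕ} (ξ : M →+ M) (hξ : ∀ (r : R) (m : M), ξ (r ^ p • m) = r • ξ m)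
    (e : ℕ) : dualHSL_T ξ hξ (e + 1) ≤ dualHSL_T ξ hξ e := by
  rintro _ ⟨x, rfl⟩
  exact ⟨ξ x, (Function.iterate_succ_apply ξ e x).symm⟩

theorem dualHSL_T_antitone {p : ℕ} (ξ : M →+ M) (hξ : ∀ (r : R) (m : M), ξ (r ^ p • m) = r • ξ m) :
    Antitone (dualHSL_T ξ hξ) :=
  antitone_nat_of_succ_le (dualHSL_T_succ_le ξ hξ)

/-- The key uniform bound: if `h • M ⊆ range ξ`, then `h^2 • M ⊆ range ξ^[e]` for every `e`.
This uses `2 ≤ p`. -/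
theorem dualHSL_uniform {p : ℕ} (hp : 2 ≤ p) (ξ : M →+ M)
    (hξ : ∀ (r : R) (m : M), ξ (r ^ p • m) = r • ξ m) {h : R}
    (H : ∀ m : M, h • m ∈ dualHSL_T ξ hξ 1) :
    ∀ (e : ℕ) (m : M), (h * h) • m ∈ dualHSL_T ξ hξ e := by
  intro e
  induction e with
  | zero => intro m; exact ⟨(h * h) • m, rfl⟩
  | succ e IH =>
      intro m
      obtain ⟨u, hu⟩ := H m
      have hu' : ξ u = h • m := by simpa using hu
      have h1 : (h * h) • m = ξ (h ^ p • u) := by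
        rw [hξ h u, hu', mul_smul]
      have h2 : h ^ p • u ∈ dualHSL_T ξ hξ e := by
        have hpow : h ^ p • u = h ^ (p - 2) • ((h * h) • u) := by
          rw [smul_smul, ← pow_two, ← pow_add, Nat.sub_add_cancel hp]
        rw [hpow]
        exact Submodule.smul_mem _ _ (IH u)
      obtain ⟨w, hw⟩ := h2
      refine ⟨w, ?_⟩
      rw [Function.iterate_succ_apply', hw, h1]

/-- Localization of a submodule, by hand. -/
def dualHSL_locSub (S : Submonoid R) (W : Submodule R M) :
    Submodule (Localization S) (LocalizedModule S M) where
  carrier := {x | ∃ t ∈ W, ∃ s : S, LocalizedModule.mk t s = x}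
  zero_mem' := ⟨0, W.zero_mem, 1, LocalizedModule.zero_mk 1⟩
  add_mem' := by
    rintro _ _ ⟨t, ht, s, rfl⟩ ⟨t', ht', s', rfl⟩
    refine ⟨s' • t + s • t', W.add_mem (W.smul_mem _ ht) (W.smul_mem _ ht'), s * s', ?_⟩
    rw [LocalizedModule.mk_add_mk]
  smul_mem' := by
    intro c x hx
    induction c using Localization.induction_on with
    | _ rs =>
        obtain ⟨t, ht, s, rfl⟩ := hx
        rw [LocalizedModule.mk_smul_mk]
        exact ⟨rs.1 • t, W.smul_mem _ ht, rs.2 * s, rfl⟩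

theorem dualHSL_locSub_mono (S : Submonoid R) {W W' : Submodule R M} (hWW' : W ≤ W') :
    dualHSL_locSub S W ≤ dualHSL_locSub S W' := by
  rintro _ ⟨t, ht, s, rfl⟩
  exact ⟨t, hWW' ht, s, rfl⟩

/-- Combining denominators over a finite set. -/
theorem dualHSL_finset_smul (S : Submonoid R) (W : Submodule R M) (s : Finset M)
    (H : ∀ x ∈ s, ∃ c ∈ S, c • x ∈ W) : ∃ c ∈ S, ∀ x ∈ s, c • x ∈ W := by
  classical
  induction s using Finset.induction_on with
  | empty => exact ⟨1, S.one_mem, by simp⟩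
  | insert _ _ ha IH =>
      rename_i a s'
      obtain ⟨c₁, hc₁, hc₁W⟩ := H a (Finset.mem_insert_self a s')
      obtain ⟨c₂, hc₂, hc₂W⟩ := IH fun x hx => H x (Finset.mem_insert_of_mem hx)
      refine ⟨c₁ * c₂, S.mul_mem hc₁ hc₂, ?_⟩
      intro x hx
      rcases Finset.mem_insert.mp hx with rfl | hx
      · rw [mul_comm, mul_smul]
        exact W.smul_mem _ hc₁W
      · rw [mul_smul]
        exact W.smul_mem _ (hc₂W x hx)

end Core

section Main

universe u v

variable {R : Type u} [CommRing R] [IsNoetherianRing R]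

/-- The main induction: statement for a given annihilator ideal. -/
private def DualHSLGoal (p : ℕ) (I : Ideal R) : Prop :=
  ∀ (M : Type v) [AddCommGroup M] [Module R M] [Module.Finite R M]
    (ξ : M →+ M) (hξ : ∀ (r : R) (m : M), ξ (r ^ p • m) = r • ξ m),
    Module.annihilator R M = I →
    ∃ k : ℕ, Set.range ((⇑ξ)^[k]) = Set.range ((⇑ξ)^[k + 1])

theorem dualHSL_core {p : ℕ} (hp : 2 ≤ p) (I : Ideal R) : DualHSLGoal.{u, v} p I := by
  have wf : WellFounded ((· > ·) : Ideal R → Ideal R → Prop) :=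
    (inferInstance : WellFoundedGT (Submodule R R)).wf
  induction I using wf.induction with
  | _ I IH =>
  intro M _ _ _ ξ hξ hI
  by_cases hA : Module.annihilator R M = ⊤
  · -- `M = 0`
    have hz : ∀ m : M, m = 0 := fun m => by
      have h1 : (1 : R) ∈ Module.annihilator R M := hA ▸ Submodule.mem_top
      have := Module.mem_annihilator.mp h1 m
      simpa using this
    refine ⟨0, Set.ext fun x => iff_of_true ⟨x, rfl⟩ ⟨x, ?_⟩⟩
    rw [hz ((⇑ξ)^[0 + 1] x), hz x]
  · -- choose a minimal prime over the annihilator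
    obtain ⟨Jmax, hJmax, hIJ⟩ := Ideal.exists_le_maximal _ hA
    haveI := hJmax.isPrime
    obtain ⟨η, hηmin, hηJ⟩ := Ideal.exists_minimalPrimes_le hIJ
    haveI hηprime : η.IsPrime := hηmin.1.1
    have hAη : Module.annihilator R M ≤ η := hηmin.1.2
    set S := η.primeCompl with hS
    let Rη := Localization S
    let Mη := LocalizedModule S M
    haveI : IsNoetherianRing Rη := IsLocalization.isNoetherianRing S Rη inferInstance
    haveI : Module.Finite Rη Mη :=
      Module.Finite.of_isLocalizedModule S (LocalizedModule.mkLinearMap S M)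
    -- the annihilator of `M` kills `Mη`
    have hkill : ∀ a ∈ Module.annihilator R M, ∀ x : Mη, a • x = 0 := by
      intro a ha x
      induction x using LocalizedModule.induction_on with
      | _ m s =>
          rw [LocalizedModule.smul'_mk, Module.mem_annihilator.mp ha m,
            LocalizedModule.zero_mk]
    -- the maximal ideal of `Rη` is contained in the radical of the annihilator of `Mη`
    have hrad : IsLocalRing.maximalIdeal Rη ≤ (Module.annihilator Rη Mη).radical := by
      rw [Ideal.radical_eq_sInf]
      refine le_sInf ?_
      rintro P ⟨hPge, hPprime⟩
      have hcomap_prime : (P.comap (algebraMap R Rη)).IsPrime := hPprime.comap _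
      have h1 : Module.annihilator R M ≤ P.comap (algebraMap R Rη) := by
        intro a ha
        have : (algebraMap R Rη a) ∈ Module.annihilator Rη Mη := by
          rw [Module.mem_annihilator]
          intro x
          rw [algebraMap_smul]
          exact hkill a ha x
        exact hPge this
      have h2 : P.comap (algebraMap R Rη) ≤ η := by
        intro x hx
        by_contra hxη
        have hunit : IsUnit (algebraMap R Rη x) :=
          IsLocalization.map_units Rη (⟨x, hxη⟩ : S)
        exact hPprime.ne_top (Ideal.eq_top_of_isUnit_mem _ hx hunit)
      have h3 : η ≤ P.comap (algebraMap R Rη) := hηmin.2 ⟨hcomap_prime, h1⟩ h2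
      have hcomap : P.comap (algebraMap R Rη) = η := le_antisymm h2 h3
      -- now show the maximal ideal is contained in `P`
      intro x hxm
      obtain ⟨⟨a, s⟩, rfl⟩ := IsLocalization.mk'_surjective S x
      dsimp only at hxm ⊢
      have hspec : IsLocalization.mk' Rη a s * algebraMap R Rη (s : R) = algebraMap R Rη a :=
        IsLocalization.mk'_spec Rη a s
      have hmem : algebraMap R Rη a ∈ IsLocalRing.maximalIdeal Rη := by
        rw [← hspec]
        exact Ideal.mul_mem_right _ _ hxm
      have haη : a ∈ η := by
        have : a ∈ (IsLocalRing.maximalIdeal Rη).comap (algebraMap R Rη) := hmem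
        rwa [← Ideal.under_def, Localization.AtPrime.comap_maximalIdeal] at this
      have haP : algebraMap R Rη a ∈ P := by
        rw [← hcomap] at haη
        exact haη
      rw [IsLocalization.mk'_eq_mul_mk'_one]
      exact Ideal.mul_mem_right _ _ haP
    -- a power of the maximal ideal kills `Mη`, so `Mη` is Artinian
    obtain ⟨n, hn⟩ := Ideal.exists_pow_le_of_le_radical_of_fg hrad
      (IsNoetherian.noetherian (IsLocalRing.maximalIdeal Rη))
    haveI : IsArtinian Rη Mη := dualHSL_isArtinian_of_maximal_pow_le_ann
      (IsLocalRing.maximalIdeal Rη) n Mη hn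
    -- the localized chain stabilizes
    let ℓchain : ℕ →o (Submodule Rη Mη)ᵒᵈ :=
      ⟨fun e => OrderDual.toDual (dualHSL_locSub S (dualHSL_T ξ hξ e)),
        fun e e' hee' => dualHSL_locSub_mono S (dualHSL_T_antitone ξ hξ hee')⟩
    obtain ⟨e₃, he₃⟩ := IsArtinian.monotone_stabilizes ℓchain
    have hstab : dualHSL_locSub S (dualHSL_T ξ hξ e₃)
        = dualHSL_locSub S (dualHSL_T ξ hξ (e₃ + 1)) := he₃ (e₃ + 1) (Nat.le_succ e₃)
    -- extract a single denominator `h ∉ η` with `h • T e₃ ⊆ T (e₃ + 1)`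
    haveI : IsNoetherian R M := inferInstance
    obtain ⟨gens, hgens⟩ := IsNoetherian.noetherian (dualHSL_T ξ hξ e₃)
    have hgen_each : ∀ x ∈ gens, ∃ c ∈ S, c • x ∈ dualHSL_T ξ hξ (e₃ + 1) := by
      intro x hx
      have hxT : x ∈ dualHSL_T ξ hξ e₃ := hgens ▸ Submodule.subset_span hx
      have hxmem : (LocalizedModule.mk x 1 : Mη) ∈ dualHSL_locSub S (dualHSL_T ξ hξ (e₃ + 1)) :=
        hstab ▸ ⟨x, hxT, 1, rfl⟩
      obtain ⟨t, ht, s, hts⟩ := hxmem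
      obtain ⟨u, hu⟩ := LocalizedModule.mk_eq.mp hts
      -- `hu : u • (1 : S) • t = u • s • x`
      refine ⟨(u : R) * (s : R), S.mul_mem u.2 s.2, ?_⟩
      have hut : (u : R) • t ∈ dualHSL_T ξ hξ (e₃ + 1) := Submodule.smul_mem _ _ ht
      have : ((u : R) * (s : R)) • x = (u : R) • t := by
        have h1 : u • (1 : S) • t = (u : R) • t := by
          rw [one_smul, Submonoid.smul_def]
        have h2 : u • s • x = ((u : R) * (s : R)) • x := by
          rw [Submonoid.smul_def, Submonoid.smul_def, smul_smul]
        rw [← h2, ← hu, h1]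
      rwa [this]
    obtain ⟨h, hhS, hh⟩ := dualHSL_finset_smul S (dualHSL_T ξ hξ (e₃ + 1)) gens hgen_each
    have hmain : ∀ x ∈ dualHSL_T ξ hξ e₃, h • x ∈ dualHSL_T ξ hξ (e₃ + 1) := by
      have hle : dualHSL_T ξ hξ e₃
          ≤ (dualHSL_T ξ hξ (e₃ + 1)).comap (LinearMap.lsmul R M h) := by
        rw [← hgens]
        rw [Submodule.span_le]
        intro x hx
        simpa using hh x hx
      intro x hx
      simpa using hle hx
    -- restrict everything to `N := T e₃`
    set Wsub := dualHSL_T ξ hξ e₃ with hWsub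
    have hstable : ∀ x ∈ Wsub, ξ x ∈ Wsub := by
      rintro _ ⟨y, rfl⟩
      exact dualHSL_T_succ_le ξ hξ e₃ ⟨y, Function.iterate_succ_apply' ξ e₃ y⟩
    let ξN : Wsub →+ Wsub :=
      AddMonoidHom.mk' (fun x => ⟨ξ x, hstable x x.2⟩)
        (fun a b => Subtype.ext (ξ.map_add a b))
    have hξN : ∀ (r : R) (x : Wsub), ξN (r ^ p • x) = r • ξN x := fun r x =>
      Subtype.ext (hξ r x)
    have hcommN : ∀ x : Wsub, (↑(ξN x) : M) = ξ ↑x := fun _ => rfl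
    haveI : Module.Finite R Wsub := Module.Finite.iff_fg.mpr (IsNoetherian.noetherian Wsub)
    -- `h • N ⊆ range ξN`
    have hN1 : ∀ x : Wsub, h • x ∈ dualHSL_T ξN hξN 1 := by
      intro x
      have hx2 : h • (x : M) ∈ dualHSL_T ξ hξ (e₃ + 1) := hmain _ x.2
      obtain ⟨y, hy⟩ := hx2
      refine ⟨⟨(⇑ξ)^[e₃] y, ⟨y, rfl⟩⟩, ?_⟩
      apply Subtype.ext
      show ξ ((⇑ξ)^[e₃] y) = h • (x : M)
      rw [← Function.iterate_succ_apply' ξ e₃ y]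
      exact hy
    -- uniform bound and the stable submodule
    have hkey : ∀ (e : ℕ) (x : Wsub), (h * h) • x ∈ dualHSL_T ξN hξN e :=
      dualHSL_uniform hp ξN hξN hN1
    set Uinf : Submodule R Wsub := ⨅ e, dualHSL_T ξN hξN e with hUinf
    have hUinf_le : ∀ e, Uinf ≤ dualHSL_T ξN hξN e := fun e => iInf_le _ e
    have hUstable : ∀ x ∈ Uinf, ξN x ∈ Uinf := by
      intro x hx
      rw [Submodule.mem_iInf] at hx ⊢
      intro e
      cases e with
      | zero => exact ⟨ξN x, rfl⟩
      | succ e =>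
          obtain ⟨y, hy⟩ := hx e
          exact ⟨y, by rw [Function.iterate_succ_apply', hy]⟩
    -- quotient module
    let Q := Wsub ⧸ Uinf
    let mkfun : Wsub → Q := fun x => Submodule.Quotient.mk x
    have hmk_surj : Function.Surjective mkfun := Submodule.Quotient.mk_surjective Uinf
    let ξQ : Q →+ Q :=
      AddMonoidHom.mk'
        (Quotient.lift (fun x : Wsub => mkfun (ξN x)) (by
          intro a b hab
          have hab' : (Submodule.Quotient.mk a : Q) = Submodule.Quotient.mk b :=
            Quotient.sound hab
          have : a - b ∈ Uinf := (Submodule.Quotient.eq Uinf).mp hab'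
          have h2 : ξN a - ξN b ∈ Uinf := by
            have := hUstable _ this
            rwa [map_sub] at this
          exact (Submodule.Quotient.eq Uinf).mpr h2))
        (by
          rintro ⟨a⟩ ⟨b⟩
          show mkfun (ξN (a + b)) = mkfun (ξN a) + mkfun (ξN b)
          rw [map_add]
          rfl)
    have hcommQ : ∀ x : Wsub, ξQ (mkfun x) = mkfun (ξN x) := fun x => rfl
    have hξQ : ∀ (r : R) (q : Q), ξQ (r ^ p • q) = r • ξQ q := by
      intro r q
      obtain ⟨x, rfl⟩ := hmk_surj q
      have h1 : r ^ p • mkfun x = mkfun (r ^ p • x) := rfl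
      rw [h1, hcommQ, hcommQ, hξN]
      rfl
    -- the annihilator strictly increases
    have hhη : h ∉ η := hhS
    have hann_lt : I < Module.annihilator R Q := by
      rw [← hI]
      refine lt_of_le_of_ne ?_ ?_
      · intro r hr
        rw [Module.mem_annihilator]
        intro q
        obtain ⟨x, rfl⟩ := hmk_surj q
        have hx0 : r • (x : M) = 0 := Module.mem_annihilator.mp hr x
        have hx0' : r • x = (0 : Wsub) := Subtype.ext (by simp [hx0])
        show r • mkfun x = 0
        have : r • mkfun x = mkfun (r • x) := rfl
        rw [this, hx0']
        rfl
      · intro heq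
        have hhh : h * h ∈ Module.annihilator R Q := by
          rw [Module.mem_annihilator]
          intro q
          obtain ⟨x, rfl⟩ := hmk_surj q
          have hmem : (h * h) • x ∈ Uinf := Submodule.mem_iInf _ |>.mpr fun e => hkey e x
          show (h * h) • mkfun x = 0
          have : (h * h) • mkfun x = mkfun ((h * h) • x) := rfl
          rw [this]
          exact (Submodule.Quotient.mk_eq_zero Uinf).mpr hmem
        have : h * h ∈ η := hAη (by rw [heq]; exact hhh)
        rcases hηprime.mul_mem_iff_mem_or_mem.mp this with hmem | hmem
        · exact hhη hmem
        · exact hhη hmem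
    -- apply the inductive hypothesis to `Q`
    obtain ⟨k, hk⟩ := IH (Module.annihilator R Q) hann_lt Q ξQ hξQ rfl
    -- pull the stabilization back to `Wsub`
    have himage : ∀ j : ℕ, Set.range ((⇑ξQ)^[j]) = mkfun '' Set.range ((⇑ξN)^[j]) := by
      intro j
      have := dualHSL_semiconj_range_iterate (φ := mkfun) (f := ⇑ξN) (g := ⇑ξQ)
        (fun a => (hcommQ a).symm) j
      rw [this, Set.range_eq_univ.mpr hmk_surj, Set.image_univ]
    have hsubeq : dualHSL_T ξN hξN k = dualHSL_T ξN hξN (k + 1) := by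
      have h1 : mkfun '' Set.range ((⇑ξN)^[k]) = mkfun '' Set.range ((⇑ξN)^[k + 1]) := by
        rw [← himage, ← himage, hk]
      refine le_antisymm ?_ (dualHSL_T_succ_le ξN hξN k)
      intro x hx
      have hxim : mkfun x ∈ mkfun '' Set.range ((⇑ξN)^[k + 1]) := by
        rw [← h1]
        exact ⟨x, hx, rfl⟩
      obtain ⟨y, hy, hxy⟩ := hxim
      have hsub : x - y ∈ Uinf := (Submodule.Quotient.eq Uinf).mp hxy.symm
      have hyT : y ∈ dualHSL_T ξN hξN (k + 1) := hy
      have hsubT : x - y ∈ dualHSL_T ξN hξN (k + 1) := hUinf_le (k + 1) hsub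
      have : x = (x - y) + y := by abel
      rw [this]
      exact Submodule.add_mem _ hsubT hyT
    -- pull back to `M`
    have hrestrict : ∀ j : ℕ,
        Set.range ((⇑ξ)^[j + e₃]) = Subtype.val '' Set.range ((⇑ξN)^[j]) := by
      intro j
      have hcomm' := dualHSL_semiconj_range_iterate
        (φ := (Subtype.val : Wsub → M)) (f := ⇑ξN) (g := ⇑ξ) hcommN j
      have hval : Set.range (Subtype.val : Wsub → M) = Set.range ((⇑ξ)^[e₃]) := by
        rw [Subtype.range_coe_subtype]
        rfl
      rw [hcomm', hval, ← Set.range_comp, ← Function.iterate_add]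
    refine ⟨k + e₃, ?_⟩
    have hfinal : Set.range ((⇑ξ)^[k + e₃]) = Set.range ((⇑ξ)^[(k + 1) + e₃]) := by
      rw [hrestrict k, hrestrict (k + 1)]
      exact congrArg (Set.image Subtype.val) (congrArg SetLike.coe hsubeq)
    have harith : (k + 1) + e₃ = (k + e₃) + 1 := by ring
    rwa [harith] at hfinal

end Main

/-- dual Hartshorne–Speiser–Lyubeznik theorem: Let `R` be a commutative
Noetherian ring of prime characteristic `p` and `M` a right `R[x,f]`-module (encoded by
the additive map `ξ : M → M`, `ξ m = m·x`, satisfying `ξ (rᵖ • m) = r • ξ m`) that is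
finitely generated as an `R`-module.  Since `M·xᵏ = {m·xᵏ : m ∈ M} = range ξ^[k]`, the
conclusion `M·xᵏ = M·xᵏ⁺¹` reads: there is `k ∈ ℕ` with `range ξ^[k] = range ξ^[k+1]`. -/
theorem dual_HSL (R M : Type*) [CommRing R] [IsNoetherianRing R] (p : ℕ) [Fact p.Prime]
    [CharP R p] [AddCommGroup M] [Module R M] [Module.Finite R M] (ξ : M →+ M)
    (hξ : ∀ (r : R) (m : M), ξ (r ^ p • m) = r • ξ m) :
    ∃ k : ℕ, Set.range ((⇑ξ)^[k]) = Set.range ((⇑ξ)^[k + 1]) := by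
  have hp : 2 ≤ p := (Fact.out : p.Prime).two_le
  exact dualHSL_core hp (Module.annihilator R M) M ξ hξ rfl
end
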